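/- arXiv:1807.02273 — 2 statements merged into one kernel-verified Lean document; each statement's English description precedes it below -/
import Mathlib

section
/- Proposition 3, first group. Let M ≥ 2 be an integer, N ≥ 1, and let μ be an integer with 1 ≤ μ ≤ M−1. Set P_L = Π_{j=μ}^{M−2} (q w_j − w_{j+1}')(w_j' − q w_{j+1}) and S_L = 2^{−(M−μ)} Π_{j=μ}^{M−1} (w_j' − q² w_j)(w_j − w_j'). Then, with respect to the pairs (w_μ, w_μ'), …, (w_{M−1}, w_{M−1}'), all carrying the bosonic exchange factor H^b, the following weak equalities hold: (w_μ' − q² w_μ) P_L ∼ 0; (w_μ' − q² w_μ) P_L w_{M−1} ∼ S_L; (w_μ' − q² w_μ) P_L w_{M−1}' ∼ −S_L; P_L (w_{M−1}' − q² w_{M−1}) ∼ 0; w_μ P_L (w_{M−1}' − q² w_{M−1}) ∼ S_L; and w_μ' P_L (w_{M−1}' − q² w_{M−1}) ∼ −S_L. -/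
/-- Bosonic exchange factor `H^b(u,v) = -(q²v - u)/(q²u - v)`. -/
noncomputable def Hb (q u v : ℂ) : ℂ := -(q ^ 2 * v - u) / (q ^ 2 * u - v)

/-- Fermionic exchange factor `H^f(u,v) = -(q²u - v)/(q²v - u)`. -/
noncomputable def Hf (q u v : ℂ) : ℂ := -(q ^ 2 * u - v) / (q ^ 2 * v - u)

/-- Exchange factor assignment for `U_q(sl^(M|N))`: bosonic for `j < M`,
the constant `-1` for `j = M`, fermionic for `j > M`. -/
noncomputable def Hex (M : ℕ) (q : ℂ) (j : ℕ) : ℂ → ℂ → ℂ :=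
  if j < M then Hb q else if j = M then fun _ _ => -1 else Hf q

/-- Interchange `w_j` and `w_j'` for every `j ∈ σ`. -/
def swapOn (σ : Finset ℕ) (w w' : ℕ → ℂ) : ℕ → ℂ := fun j => if j ∈ σ then w' j else w j

/-- Weak equality `F ∼ G` with respect to the pairs `(w_j, w_j')`, `j ∈ J`,
carrying exchange factors `H j`. -/
def WeakEq (J : Finset ℕ) (H : ℕ → ℂ → ℂ → ℂ) (w w' : ℕ → ℂ)
    (F G : (ℕ → ℂ) → (ℕ → ℂ) → ℂ) : Prop :=
  ∑ σ ∈ J.powerset, (∏ j ∈ σ, H j (w' j) (w j)) * F (swapOn σ w w') (swapOn σ w' w)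
    = ∑ σ ∈ J.powerset, (∏ j ∈ σ, H j (w' j) (w j)) * G (swapOn σ w w') (swapOn σ w' w)

/-- `P_L = Π_{j=μ}^{M−2} (q w_j − w_{j+1}')(w_j' − q w_{j+1})`. -/
noncomputable def PL (q : ℂ) (μ M : ℕ) (u u' : ℕ → ℂ) : ℂ :=
  ∏ j ∈ Finset.Ico μ (M - 1), (q * u j - u' (j + 1)) * (u' j - q * u (j + 1))

/-- `S_L = 2^{−(M−μ)} Π_{j=μ}^{M−1} (w_j' − q² w_j)(w_j − w_j')`. -/
noncomputable def SL (q : ℂ) (μ M : ℕ) (u u' : ℕ → ℂ) : ℂ :=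
  (1 / 2 ^ (M - μ)) * ∏ j ∈ Finset.Ico μ M, (u' j - q ^ 2 * u j) * (u j - u' j)

section Aux

open Finset

lemma swapOn_insert (σ : Finset ℕ) (j : ℕ) (w w' : ℕ → ℂ) :
    swapOn (insert j σ) w w' = Function.update (swapOn σ w w') j (w' j) := by
  funext i
  rcases eq_or_ne i j with rfl | h
  · simp [swapOn]
  · simp [swapOn, Function.update_of_ne h, Finset.mem_insert, h]

lemma swapOn_not_mem (σ : Finset ℕ) (j : ℕ) (h : j ∉ σ) (w w' : ℕ → ℂ) :
    swapOn σ w w' j = w j := by simp [swapOn, h]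

lemma reduce (J : Finset ℕ) (j : ℕ) (hj : j ∉ J) (H : ℕ → ℂ → ℂ → ℂ) (w w' : ℕ → ℂ)
    (F G : (ℕ → ℂ) → (ℕ → ℂ) → ℂ)
    (h : ∀ u u' : ℕ → ℂ, u j = w j → u' j = w' j →
      F u u' + H j (w' j) (w j) * F (Function.update u j (w' j)) (Function.update u' j (w j))
        = G u u') :
    ∑ σ ∈ (insert j J).powerset, (∏ i ∈ σ, H i (w' i) (w i)) * F (swapOn σ w w') (swapOn σ w' w)
      = ∑ σ ∈ J.powerset, (∏ i ∈ σ, H i (w' i) (w i)) * G (swapOn σ w w') (swapOn σ w' w) := by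
  rw [Finset.sum_powerset_insert hj, ← Finset.sum_add_distrib]
  refine Finset.sum_congr rfl fun σ hσ => ?_
  have hjσ : j ∉ σ := fun hh => hj (Finset.mem_powerset.mp hσ hh)
  have key := h (swapOn σ w w') (swapOn σ w' w)
    (swapOn_not_mem σ j hjσ w w') (swapOn_not_mem σ j hjσ w' w)
  rw [Finset.prod_insert hjσ, swapOn_insert, swapOn_insert]
  linear_combination (∏ i ∈ σ, H i (w' i) (w i)) * key

lemma sum_smul_congr (J : Finset ℕ) (H : ℕ → ℂ → ℂ → ℂ) (w w' : ℕ → ℂ) (c : ℂ)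
    (F G : (ℕ → ℂ) → (ℕ → ℂ) → ℂ)
    (h : ∑ σ ∈ J.powerset, (∏ i ∈ σ, H i (w' i) (w i)) * F (swapOn σ w w') (swapOn σ w' w)
       = ∑ σ ∈ J.powerset, (∏ i ∈ σ, H i (w' i) (w i)) * G (swapOn σ w w') (swapOn σ w' w)) :
    ∑ σ ∈ J.powerset, (∏ i ∈ σ, H i (w' i) (w i)) * (c * F (swapOn σ w w') (swapOn σ w' w))
      = ∑ σ ∈ J.powerset, (∏ i ∈ σ, H i (w' i) (w i)) * (c * G (swapOn σ w w') (swapOn σ w' w)) := by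
  have key : ∀ F : (ℕ → ℂ) → (ℕ → ℂ) → ℂ,
      ∑ σ ∈ J.powerset, (∏ i ∈ σ, H i (w' i) (w i)) * (c * F (swapOn σ w w') (swapOn σ w' w))
        = c * ∑ σ ∈ J.powerset, (∏ i ∈ σ, H i (w' i) (w i)) * F (swapOn σ w w') (swapOn σ w' w) := by
    intro F
    rw [Finset.mul_sum]
    exact Finset.sum_congr rfl fun σ _ => by ring
  rw [key, key, h]

lemma PL_triv (q : ℂ) (a : ℕ) (u u' : ℕ → ℂ) : PL q a (a + 1) u u' = 1 := by
  unfold PL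
  rw [show a + 1 - 1 = a from rfl, Finset.Ico_self, Finset.prod_empty]

lemma PL_bot (q : ℂ) (a b : ℕ) (h : a < b) (u u' : ℕ → ℂ) :
    PL q a (b + 1) u u'
      = (q * u a - u' (a + 1)) * (u' a - q * u (a + 1)) * PL q (a + 1) (b + 1) u u' := by
  unfold PL
  rw [show b + 1 - 1 = b from rfl, Finset.prod_eq_prod_Ico_succ_bot h]

lemma PL_top (q : ℂ) (a b : ℕ) (h : a ≤ b) (u u' : ℕ → ℂ) :
    PL q a (b + 1 + 1) u u'
      = PL q a (b + 1) u u' * ((q * u b - u' (b + 1)) * (u' b - q * u (b + 1))) := by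
  unfold PL
  rw [show b + 1 + 1 - 1 = b + 1 from rfl, show b + 1 - 1 = b from rfl,
    Finset.prod_Ico_succ_top h]

lemma PL_update_lt (q : ℂ) (a M k : ℕ) (h : k < a) (u u' : ℕ → ℂ) (x y : ℂ) :
    PL q a M (Function.update u k x) (Function.update u' k y) = PL q a M u u' := by
  unfold PL
  refine Finset.prod_congr rfl fun j hj => ?_
  rw [Finset.mem_Ico] at hj
  rw [Function.update_of_ne (show j ≠ k by omega), Function.update_of_ne (show j ≠ k by omega),
    Function.update_of_ne (show j + 1 ≠ k by omega),
    Function.update_of_ne (show j + 1 ≠ k by omega)]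

lemma PL_update_ge (q : ℂ) (a M k : ℕ) (h : M ≤ k) (u u' : ℕ → ℂ) (x y : ℂ) :
    PL q a M (Function.update u k x) (Function.update u' k y) = PL q a M u u' := by
  unfold PL
  refine Finset.prod_congr rfl fun j hj => ?_
  rw [Finset.mem_Ico] at hj
  rw [Function.update_of_ne (show j ≠ k by omega), Function.update_of_ne (show j ≠ k by omega),
    Function.update_of_ne (show j + 1 ≠ k by omega),
    Function.update_of_ne (show j + 1 ≠ k by omega)]

lemma SL_single (q : ℂ) (a : ℕ) (u u' : ℕ → ℂ) :
    SL q a (a + 1) u u' = 1 / 2 * ((u' a - q ^ 2 * u a) * (u a - u' a)) := by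
  unfold SL
  rw [show a + 1 - a = 1 by omega, Nat.Ico_succ_singleton, Finset.prod_singleton, pow_one]

lemma SL_bot (q : ℂ) (a b : ℕ) (h : a < b) (u u' : ℕ → ℂ) :
    SL q a b u u'
      = 1 / 2 * ((u' a - q ^ 2 * u a) * (u a - u' a)) * SL q (a + 1) b u u' := by
  unfold SL
  rw [Finset.prod_eq_prod_Ico_succ_bot h, show b - a = b - (a + 1) + 1 by omega, pow_succ]
  ring

lemma SL_top (q : ℂ) (a b : ℕ) (h : a ≤ b) (u u' : ℕ → ℂ) :
    SL q a (b + 1) u u'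
      = 1 / 2 * SL q a b u u' * ((u' b - q ^ 2 * u b) * (u b - u' b)) := by
  unfold SL
  rw [Finset.prod_Ico_succ_top h, show b + 1 - a = b - a + 1 by omega, pow_succ]
  ring

lemma SL_update_lt (q : ℂ) (a M k : ℕ) (h : k < a) (u u' : ℕ → ℂ) (x y : ℂ) :
    SL q a M (Function.update u k x) (Function.update u' k y) = SL q a M u u' := by
  unfold SL
  congr 1
  refine Finset.prod_congr rfl fun j hj => ?_
  rw [Finset.mem_Ico] at hj
  rw [Function.update_of_ne (show j ≠ k by omega), Function.update_of_ne (show j ≠ k by omega)]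

lemma SL_update_ge (q : ℂ) (a M k : ℕ) (h : M ≤ k) (u u' : ℕ → ℂ) (x y : ℂ) :
    SL q a M (Function.update u k x) (Function.update u' k y) = SL q a M u u' := by
  unfold SL
  congr 1
  refine Finset.prod_congr rfl fun j hj => ?_
  rw [Finset.mem_Ico] at hj
  rw [Function.update_of_ne (show j ≠ k by omega), Function.update_of_ne (show j ≠ k by omega)]

end Aux

lemma master (q : ℂ) (n : ℕ) : ∀ (μ : ℕ) (w w' : ℕ → ℂ),
    (∀ j ∈ Finset.Ico μ (μ + n + 1), q ^ 2 * w' j ≠ w j) →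
    (WeakEq (Finset.Ico μ (μ + n + 1)) (fun _ => Hb q) w w'
      (fun u u' => (u' μ - q ^ 2 * u μ) * PL q μ (μ + n + 1) u u') (fun _ _ => 0) ∧
    WeakEq (Finset.Ico μ (μ + n + 1)) (fun _ => Hb q) w w'
      (fun u u' => (u' μ - q ^ 2 * u μ) * PL q μ (μ + n + 1) u u' * u (μ + n))
      (fun u u' => SL q μ (μ + n + 1) u u') ∧
    WeakEq (Finset.Ico μ (μ + n + 1)) (fun _ => Hb q) w w'
      (fun u u' => (u' μ - q ^ 2 * u μ) * PL q μ (μ + n + 1) u u' * u' (μ + n))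
      (fun u u' => -SL q μ (μ + n + 1) u u') ∧
    WeakEq (Finset.Ico μ (μ + n + 1)) (fun _ => Hb q) w w'
      (fun u u' => PL q μ (μ + n + 1) u u' * (u' (μ + n) - q ^ 2 * u (μ + n)))
      (fun _ _ => 0) ∧
    WeakEq (Finset.Ico μ (μ + n + 1)) (fun _ => Hb q) w w'
      (fun u u' => u μ * PL q μ (μ + n + 1) u u' * (u' (μ + n) - q ^ 2 * u (μ + n)))
      (fun u u' => SL q μ (μ + n + 1) u u') ∧
    WeakEq (Finset.Ico μ (μ + n + 1)) (fun _ => Hb q) w w'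
      (fun u u' => u' μ * PL q μ (μ + n + 1) u u' * (u' (μ + n) - q ^ 2 * u (μ + n)))
      (fun u u' => -SL q μ (μ + n + 1) u u')) := by
  induction n with
  | zero =>
    intro μ w w' hden
    simp only [Nat.add_zero] at hden ⊢
    have hA : q ^ 2 * w' μ - w μ ≠ 0 :=
      sub_ne_zero.mpr (hden μ (by rw [Finset.mem_Ico]; omega))
    have hA' : w' μ * q ^ 2 - w μ ≠ 0 := by rw [mul_comm]; exact hA
    have hJ : Finset.Ico μ (μ + 1) = insert μ (∅ : Finset ℕ) := by
      ext i
      simp only [Finset.mem_Ico, Finset.mem_insert, Finset.notMem_empty, or_false]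
      omega
    have hnot : μ ∉ (∅ : Finset ℕ) := Finset.notMem_empty μ
    refine ⟨?_, ?_, ?_, ?_, ?_, ?_⟩
    · rw [hJ]
      exact (reduce ∅ μ hnot (fun _ => Hb q) w w'
          (fun u u' => (u' μ - q ^ 2 * u μ) * PL q μ (μ + 1) u u')
          (fun _ _ => (0 : ℂ)) (by
            intro u u' h1 h2
            simp only [PL_triv, Function.update_self, h1, h2, Hb, mul_one]
            field_simp
            ring)).trans
        (reduce ∅ μ hnot (fun _ => Hb q) w w' (fun _ _ => (0 : ℂ)) (fun _ _ => (0 : ℂ))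
          (by intro u u' _ _; simp)).symm
    · rw [hJ]
      exact (reduce ∅ μ hnot (fun _ => Hb q) w w'
          (fun u u' => (u' μ - q ^ 2 * u μ) * PL q μ (μ + 1) u u' * u μ)
          (fun _ _ => (w' μ - q ^ 2 * w μ) * (w μ - w' μ)) (by
            intro u u' h1 h2
            simp only [PL_triv, Function.update_self, h1, h2, Hb, mul_one]
            field_simp
            ring)).trans
        (reduce ∅ μ hnot (fun _ => Hb q) w w'
          (fun u u' => SL q μ (μ + 1) u u')
          (fun _ _ => (w' μ - q ^ 2 * w μ) * (w μ - w' μ)) (by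
            intro u u' h1 h2
            simp only [SL_single, Function.update_self, h1, h2, Hb]
            field_simp
            ring)).symm
    · rw [hJ]
      exact (reduce ∅ μ hnot (fun _ => Hb q) w w'
          (fun u u' => (u' μ - q ^ 2 * u μ) * PL q μ (μ + 1) u u' * u' μ)
          (fun _ _ => -((w' μ - q ^ 2 * w μ) * (w μ - w' μ))) (by
            intro u u' h1 h2
            simp only [PL_triv, Function.update_self, h1, h2, Hb, mul_one]
            field_simp
            ring)).trans
        (reduce ∅ μ hnot (fun _ => Hb q) w w'
          (fun u u' => -SL q μ (μ + 1) u u')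
          (fun _ _ => -((w' μ - q ^ 2 * w μ) * (w μ - w' μ))) (by
            intro u u' h1 h2
            simp only [SL_single, Function.update_self, h1, h2, Hb]
            field_simp
            ring)).symm
    · rw [hJ]
      exact (reduce ∅ μ hnot (fun _ => Hb q) w w'
          (fun u u' => PL q μ (μ + 1) u u' * (u' μ - q ^ 2 * u μ))
          (fun _ _ => (0 : ℂ)) (by
            intro u u' h1 h2
            simp only [PL_triv, Function.update_self, h1, h2, Hb, one_mul]
            field_simp
            ring)).trans
        (reduce ∅ μ hnot (fun _ => Hb q) w w' (fun _ _ => (0 : ℂ)) (fun _ _ => (0 : ℂ))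
          (by intro u u' _ _; simp)).symm
    · rw [hJ]
      exact (reduce ∅ μ hnot (fun _ => Hb q) w w'
          (fun u u' => u μ * PL q μ (μ + 1) u u' * (u' μ - q ^ 2 * u μ))
          (fun _ _ => (w' μ - q ^ 2 * w μ) * (w μ - w' μ)) (by
            intro u u' h1 h2
            simp only [PL_triv, Function.update_self, h1, h2, Hb, mul_one]
            field_simp
            ring)).trans
        (reduce ∅ μ hnot (fun _ => Hb q) w w'
          (fun u u' => SL q μ (μ + 1) u u')
          (fun _ _ => (w' μ - q ^ 2 * w μ) * (w μ - w' μ)) (by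
            intro u u' h1 h2
            simp only [SL_single, Function.update_self, h1, h2, Hb]
            field_simp
            ring)).symm
    · rw [hJ]
      exact (reduce ∅ μ hnot (fun _ => Hb q) w w'
          (fun u u' => u' μ * PL q μ (μ + 1) u u' * (u' μ - q ^ 2 * u μ))
          (fun _ _ => -((w' μ - q ^ 2 * w μ) * (w μ - w' μ))) (by
            intro u u' h1 h2
            simp only [PL_triv, Function.update_self, h1, h2, Hb, mul_one]
            field_simp
            ring)).trans
        (reduce ∅ μ hnot (fun _ => Hb q) w w'
          (fun u u' => -SL q μ (μ + 1) u u')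
          (fun _ _ => -((w' μ - q ^ 2 * w μ) * (w μ - w' μ))) (by
            intro u u' h1 h2
            simp only [SL_single, Function.update_self, h1, h2, Hb]
            field_simp
            ring)).symm
  | succ k ih =>
    intro μ w w' hden
    simp only [Nat.succ_eq_add_one, ← Nat.add_assoc] at hden ⊢
    have hden' : ∀ j ∈ Finset.Ico (μ + 1) (μ + 1 + k + 1), q ^ 2 * w' j ≠ w j :=
      fun j hj => hden j (by rw [Finset.mem_Ico] at hj ⊢; omega)
    have ihA := ih (μ + 1) w w' hden'
    simp only [show μ + 1 + k = μ + k + 1 from by omega] at ihA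
    have hden'' : ∀ j ∈ Finset.Ico μ (μ + k + 1), q ^ 2 * w' j ≠ w j :=
      fun j hj => hden j (by rw [Finset.mem_Ico] at hj ⊢; omega)
    have ihB := ih μ w w' hden''
    have hμnot : μ ∉ Finset.Ico (μ + 1) (μ + k + 1 + 1) := by
      intro hmem; rw [Finset.mem_Ico] at hmem; omega
    have htopnot : μ + k + 1 ∉ Finset.Ico μ (μ + k + 1) := by
      intro hmem; rw [Finset.mem_Ico] at hmem; omega
    have hJ1 : Finset.Ico μ (μ + k + 1 + 1) = insert μ (Finset.Ico (μ + 1) (μ + k + 1 + 1)) := by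
      ext i; simp only [Finset.mem_Ico, Finset.mem_insert]; omega
    have hJ2 : Finset.Ico μ (μ + k + 1 + 1) = insert (μ + k + 1) (Finset.Ico μ (μ + k + 1)) := by
      ext i; simp only [Finset.mem_Ico, Finset.mem_insert]; omega
    have hA : q ^ 2 * w' μ - w μ ≠ 0 :=
      sub_ne_zero.mpr (hden μ (by rw [Finset.mem_Ico]; omega))
    have hB : q ^ 2 * w' (μ + k + 1) - w (μ + k + 1) ≠ 0 :=
      sub_ne_zero.mpr (hden (μ + k + 1) (by rw [Finset.mem_Ico]; omega))
    have hA' : w' μ * q ^ 2 - w μ ≠ 0 := by rw [mul_comm]; exact hA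
    have hB' : w' (μ + k + 1) * q ^ 2 - w (μ + k + 1) ≠ 0 := by rw [mul_comm]; exact hB
    refine ⟨?_, ?_, ?_, ?_, ?_, ?_⟩
    · rw [hJ1]
      exact (reduce _ μ hμnot (fun _ => Hb q) w w'
          (fun u u' => (u' μ - q ^ 2 * u μ) * PL q μ (μ + k + 1 + 1) u u')
          (fun u u' => (w' μ - q ^ 2 * w μ) * (w μ - w' μ) *
            ((u' (μ + 1) - q ^ 2 * u (μ + 1)) * PL q (μ + 1) (μ + k + 1 + 1) u u')) (by
            intro u u' h1 h2
            simp only [PL_bot q μ (μ + k + 1) (by omega),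
              PL_update_lt q (μ + 1) (μ + k + 1 + 1) μ (by omega),
              Function.update_self, Function.update_of_ne (show μ + 1 ≠ μ by omega),
              h1, h2, Hb]
            field_simp
            ring)).trans
        ((sum_smul_congr _ (fun _ => Hb q) w w' ((w' μ - q ^ 2 * w μ) * (w μ - w' μ))
          (fun u u' => (u' (μ + 1) - q ^ 2 * u (μ + 1)) * PL q (μ + 1) (μ + k + 1 + 1) u u')
          (fun _ _ => (0 : ℂ)) ihA.1).trans
        (reduce _ μ hμnot (fun _ => Hb q) w w' (fun _ _ => (0 : ℂ))
          (fun _ _ => (w' μ - q ^ 2 * w μ) * (w μ - w' μ) * (0 : ℂ))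
          (by intro u u' _ _; simp)).symm)
    · rw [hJ1]
      exact (reduce _ μ hμnot (fun _ => Hb q) w w'
          (fun u u' => (u' μ - q ^ 2 * u μ) * PL q μ (μ + k + 1 + 1) u u' * u (μ + k + 1))
          (fun u u' => (w' μ - q ^ 2 * w μ) * (w μ - w' μ) *
            ((u' (μ + 1) - q ^ 2 * u (μ + 1)) * PL q (μ + 1) (μ + k + 1 + 1) u u'
              * u (μ + k + 1))) (by
            intro u u' h1 h2
            simp only [PL_bot q μ (μ + k + 1) (by omega),
              PL_update_lt q (μ + 1) (μ + k + 1 + 1) μ (by omega),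
              Function.update_self, Function.update_of_ne (show μ + 1 ≠ μ by omega),
              Function.update_of_ne (show μ + k + 1 ≠ μ by omega), h1, h2, Hb]
            field_simp
            ring)).trans
        ((sum_smul_congr _ (fun _ => Hb q) w w' ((w' μ - q ^ 2 * w μ) * (w μ - w' μ))
          (fun u u' => (u' (μ + 1) - q ^ 2 * u (μ + 1)) * PL q (μ + 1) (μ + k + 1 + 1) u u'
            * u (μ + k + 1))
          (fun u u' => SL q (μ + 1) (μ + k + 1 + 1) u u') ihA.2.1).trans
        (reduce _ μ hμnot (fun _ => Hb q) w w'
          (fun u u' => SL q μ (μ + k + 1 + 1) u u')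
          (fun u u' => (w' μ - q ^ 2 * w μ) * (w μ - w' μ) * SL q (μ + 1) (μ + k + 1 + 1) u u')
          (by
            intro u u' h1 h2
            simp only [SL_bot q μ (μ + k + 1 + 1) (by omega),
              SL_update_lt q (μ + 1) (μ + k + 1 + 1) μ (by omega),
              Function.update_self, h1, h2, Hb]
            field_simp
            ring)).symm)
    · rw [hJ1]
      exact (reduce _ μ hμnot (fun _ => Hb q) w w'
          (fun u u' => (u' μ - q ^ 2 * u μ) * PL q μ (μ + k + 1 + 1) u u' * u' (μ + k + 1))
          (fun u u' => (w' μ - q ^ 2 * w μ) * (w μ - w' μ) *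
            ((u' (μ + 1) - q ^ 2 * u (μ + 1)) * PL q (μ + 1) (μ + k + 1 + 1) u u'
              * u' (μ + k + 1))) (by
            intro u u' h1 h2
            simp only [PL_bot q μ (μ + k + 1) (by omega),
              PL_update_lt q (μ + 1) (μ + k + 1 + 1) μ (by omega),
              Function.update_self, Function.update_of_ne (show μ + 1 ≠ μ by omega),
              Function.update_of_ne (show μ + k + 1 ≠ μ by omega), h1, h2, Hb]
            field_simp
            ring)).trans
        ((sum_smul_congr _ (fun _ => Hb q) w w' ((w' μ - q ^ 2 * w μ) * (w μ - w' μ))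
          (fun u u' => (u' (μ + 1) - q ^ 2 * u (μ + 1)) * PL q (μ + 1) (μ + k + 1 + 1) u u'
            * u' (μ + k + 1))
          (fun u u' => -SL q (μ + 1) (μ + k + 1 + 1) u u') ihA.2.2.1).trans
        (reduce _ μ hμnot (fun _ => Hb q) w w'
          (fun u u' => -SL q μ (μ + k + 1 + 1) u u')
          (fun u u' => (w' μ - q ^ 2 * w μ) * (w μ - w' μ) *
            (-SL q (μ + 1) (μ + k + 1 + 1) u u'))
          (by
            intro u u' h1 h2
            simp only [SL_bot q μ (μ + k + 1 + 1) (by omega),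
              SL_update_lt q (μ + 1) (μ + k + 1 + 1) μ (by omega),
              Function.update_self, h1, h2, Hb]
            field_simp
            ring)).symm)
    · rw [hJ2]
      exact (reduce _ (μ + k + 1) htopnot (fun _ => Hb q) w w'
          (fun u u' => PL q μ (μ + k + 1 + 1) u u' * (u' (μ + k + 1) - q ^ 2 * u (μ + k + 1)))
          (fun u u' => (w' (μ + k + 1) - q ^ 2 * w (μ + k + 1)) *
              (w (μ + k + 1) - w' (μ + k + 1)) *
            (PL q μ (μ + k + 1) u u' * (u' (μ + k) - q ^ 2 * u (μ + k)))) (by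
            intro u u' h1 h2
            simp only [PL_top q μ (μ + k) (by omega),
              PL_update_ge q μ (μ + k + 1) (μ + k + 1) le_rfl,
              Function.update_self, Function.update_of_ne (show μ + k ≠ μ + k + 1 by omega),
              h1, h2, Hb]
            field_simp
            ring)).trans
        ((sum_smul_congr _ (fun _ => Hb q) w w'
          ((w' (μ + k + 1) - q ^ 2 * w (μ + k + 1)) * (w (μ + k + 1) - w' (μ + k + 1)))
          (fun u u' => PL q μ (μ + k + 1) u u' * (u' (μ + k) - q ^ 2 * u (μ + k)))
          (fun _ _ => (0 : ℂ)) ihB.2.2.2.1).trans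
        (reduce _ (μ + k + 1) htopnot (fun _ => Hb q) w w' (fun _ _ => (0 : ℂ))
          (fun _ _ => (w' (μ + k + 1) - q ^ 2 * w (μ + k + 1)) *
            (w (μ + k + 1) - w' (μ + k + 1)) * (0 : ℂ))
          (by intro u u' _ _; simp)).symm)
    · rw [hJ2]
      exact (reduce _ (μ + k + 1) htopnot (fun _ => Hb q) w w'
          (fun u u' => u μ * PL q μ (μ + k + 1 + 1) u u'
            * (u' (μ + k + 1) - q ^ 2 * u (μ + k + 1)))
          (fun u u' => (w' (μ + k + 1) - q ^ 2 * w (μ + k + 1)) *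
              (w (μ + k + 1) - w' (μ + k + 1)) *
            (u μ * PL q μ (μ + k + 1) u u' * (u' (μ + k) - q ^ 2 * u (μ + k)))) (by
            intro u u' h1 h2
            simp only [PL_top q μ (μ + k) (by omega),
              PL_update_ge q μ (μ + k + 1) (μ + k + 1) le_rfl,
              Function.update_self, Function.update_of_ne (show μ + k ≠ μ + k + 1 by omega),
              Function.update_of_ne (show μ ≠ μ + k + 1 by omega), h1, h2, Hb]
            field_simp
            ring)).trans
        ((sum_smul_congr _ (fun _ => Hb q) w w'
          ((w' (μ + k + 1) - q ^ 2 * w (μ + k + 1)) * (w (μ + k + 1) - w' (μ + k + 1)))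
          (fun u u' => u μ * PL q μ (μ + k + 1) u u' * (u' (μ + k) - q ^ 2 * u (μ + k)))
          (fun u u' => SL q μ (μ + k + 1) u u') ihB.2.2.2.2.1).trans
        (reduce _ (μ + k + 1) htopnot (fun _ => Hb q) w w'
          (fun u u' => SL q μ (μ + k + 1 + 1) u u')
          (fun u u' => (w' (μ + k + 1) - q ^ 2 * w (μ + k + 1)) *
            (w (μ + k + 1) - w' (μ + k + 1)) * SL q μ (μ + k + 1) u u')
          (by
            intro u u' h1 h2
            simp only [SL_top q μ (μ + k + 1) (by omega),
              SL_update_ge q μ (μ + k + 1) (μ + k + 1) le_rfl,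
              Function.update_self, h1, h2, Hb]
            field_simp
            ring)).symm)
    · rw [hJ2]
      exact (reduce _ (μ + k + 1) htopnot (fun _ => Hb q) w w'
          (fun u u' => u' μ * PL q μ (μ + k + 1 + 1) u u'
            * (u' (μ + k + 1) - q ^ 2 * u (μ + k + 1)))
          (fun u u' => (w' (μ + k + 1) - q ^ 2 * w (μ + k + 1)) *
              (w (μ + k + 1) - w' (μ + k + 1)) *
            (u' μ * PL q μ (μ + k + 1) u u' * (u' (μ + k) - q ^ 2 * u (μ + k)))) (by
            intro u u' h1 h2
            simp only [PL_top q μ (μ + k) (by omega),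
              PL_update_ge q μ (μ + k + 1) (μ + k + 1) le_rfl,
              Function.update_self, Function.update_of_ne (show μ + k ≠ μ + k + 1 by omega),
              Function.update_of_ne (show μ ≠ μ + k + 1 by omega), h1, h2, Hb]
            field_simp
            ring)).trans
        ((sum_smul_congr _ (fun _ => Hb q) w w'
          ((w' (μ + k + 1) - q ^ 2 * w (μ + k + 1)) * (w (μ + k + 1) - w' (μ + k + 1)))
          (fun u u' => u' μ * PL q μ (μ + k + 1) u u' * (u' (μ + k) - q ^ 2 * u (μ + k)))
          (fun u u' => -SL q μ (μ + k + 1) u u') ihB.2.2.2.2.2).trans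
        (reduce _ (μ + k + 1) htopnot (fun _ => Hb q) w w'
          (fun u u' => -SL q μ (μ + k + 1 + 1) u u')
          (fun u u' => (w' (μ + k + 1) - q ^ 2 * w (μ + k + 1)) *
            (w (μ + k + 1) - w' (μ + k + 1)) * -SL q μ (μ + k + 1) u u')
          (by
            intro u u' h1 h2
            simp only [SL_top q μ (μ + k + 1) (by omega),
              SL_update_ge q μ (μ + k + 1) (μ + k + 1) le_rfl,
              Function.update_self, h1, h2, Hb]
            field_simp
            ring)).symm)

/-- Proposition 3, first group: six weak equalities for the bosonic pairs
`(w_μ, w_μ'), …, (w_{M−1}, w_{M−1}')`. -/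
theorem proposition3_first (M N : ℕ) (hM : 2 ≤ M) (hN : 1 ≤ N)
    (μ : ℕ) (hμ1 : 1 ≤ μ) (hμ2 : μ ≤ M - 1)
    (q : ℂ) (hq : q ≠ 0) (hq2 : q ^ 2 ≠ 1) (w w' : ℕ → ℂ)
    (hden : ∀ j ∈ Finset.Ico μ M, q ^ 2 * w' j ≠ w j) :
    WeakEq (Finset.Ico μ M) (fun _ => Hb q) w w'
      (fun u u' => (u' μ - q ^ 2 * u μ) * PL q μ M u u') (fun _ _ => 0) ∧
    WeakEq (Finset.Ico μ M) (fun _ => Hb q) w w'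
      (fun u u' => (u' μ - q ^ 2 * u μ) * PL q μ M u u' * u (M - 1))
      (fun u u' => SL q μ M u u') ∧
    WeakEq (Finset.Ico μ M) (fun _ => Hb q) w w'
      (fun u u' => (u' μ - q ^ 2 * u μ) * PL q μ M u u' * u' (M - 1))
      (fun u u' => -SL q μ M u u') ∧
    WeakEq (Finset.Ico μ M) (fun _ => Hb q) w w'
      (fun u u' => PL q μ M u u' * (u' (M - 1) - q ^ 2 * u (M - 1))) (fun _ _ => 0) ∧
    WeakEq (Finset.Ico μ M) (fun _ => Hb q) w w'
      (fun u u' => u μ * PL q μ M u u' * (u' (M - 1) - q ^ 2 * u (M - 1)))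
      (fun u u' => SL q μ M u u') ∧
    WeakEq (Finset.Ico μ M) (fun _ => Hb q) w w'
      (fun u u' => u' μ * PL q μ M u u' * (u' (M - 1) - q ^ 2 * u (M - 1)))
      (fun u u' => -SL q μ M u u') := by
  obtain ⟨n, rfl⟩ : ∃ n, M = μ + n + 1 := ⟨M - μ - 1, by omega⟩
  exact master q n μ w w' hden
end

section
/- Proposition 1, second case. Let M ≥ 2, N ≥ 1 and let μ, ν be integers with 1 ≤ μ < ν ≤ M. Write Q = Π_{j=μ}^{ν−2} (q w_{j+1} − w_j')(w_{j+1}' − q w_j). Then, with respect to the pairs (w_μ, w_μ'), …, (w_{ν−1}, w_{ν−1}'), all carrying the bosonic exchange factor H^b, and with w_{μ−1}, w_ν further free variables, the weak equality (q w_μ − w_{μ−1}) · Q · (q w_ν − w_{ν−1}') ∼ (w_μ' − q w_{μ−1}) · Q · (w_ν − q w_{ν−1}) holds. -/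
/-- `Q = Π_{j=μ}^{ν−2} (q w_{j+1} − w_j')(w_{j+1}' − q w_j)`. -/
noncomputable def Qbos (q : ℂ) (μ ν : ℕ) (u u' : ℕ → ℂ) : ℂ :=
  ∏ j ∈ Finset.Ico μ (ν - 1), (q * u (j + 1) - u' j) * (u' (j + 1) - q * u j)

-- auxiliary

lemma swapOn_not {σ : Finset ℕ} {m : ℕ} (h : m ∉ σ) (w w' : ℕ → ℂ) :
    swapOn σ w w' m = w m := by simp [swapOn, h]

lemma swapOn_insert_self (σ : Finset ℕ) (m : ℕ) (w w' : ℕ → ℂ) :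
    swapOn (insert m σ) w w' m = w' m := by simp [swapOn]

lemma swapOn_insert_ne (σ : Finset ℕ) (m : ℕ) (w w' : ℕ → ℂ) {j : ℕ} (h : j ≠ m) :
    swapOn (insert m σ) w w' j = swapOn σ w w' j := by simp [swapOn, h]

lemma swapOn_empty (w w' : ℕ → ℂ) : swapOn ∅ w w' = w := by
  funext j; simp [swapOn]

/-- Left telescoping functional. -/
noncomputable def Lfun (q : ℂ) (ν m : ℕ) (u u' : ℕ → ℂ) : ℂ :=
  (q ^ 2 * u m - u' m) *
    (∏ j ∈ Finset.Ico m (ν - 1), (q * u (j + 1) - u' j) * (u' (j + 1) - q * u j)) *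
    (q * u ν - u' (ν - 1))

/-- Right telescoping functional. -/
noncomputable def Rfun (q : ℂ) (μ m : ℕ) (u u' : ℕ → ℂ) : ℂ :=
  (u' μ - q * u (μ - 1)) *
    (∏ j ∈ Finset.Ico μ m, (q * u (j + 1) - u' j) * (u' (j + 1) - q * u j)) *
    (q ^ 2 * u m - u' m)

lemma Lsum (q : ℂ) (w w' : ℕ → ℂ) (ν : ℕ) :
    ∀ k m, m + k + 1 = ν → (∀ j ∈ Finset.Ico m ν, q ^ 2 * w' j ≠ w j) →
    ∑ σ ∈ (Finset.Ico m ν).powerset,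
        (∏ j ∈ σ, Hb q (w' j) (w j)) * Lfun q ν m (swapOn σ w w') (swapOn σ w' w)
      = (-1) ^ k * ∏ j ∈ Finset.Ico m ν, (q ^ 2 * w j - w' j) * (w j - w' j) := by
  intro k
  induction k with
  | zero =>
    intro m hm hden
    have hν : ν = m + 1 := by omega
    subst hν
    have hd : q ^ 2 * w' m - w m ≠ 0 :=
      sub_ne_zero.mpr (hden m (by simp [Finset.mem_Ico]))
    rw [← Finset.insert_Ico_add_one_left_eq_Ico (by omega : m < m + 1), Finset.Ico_self,
      Finset.sum_powerset_insert (by simp), Finset.powerset_empty,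
      Finset.sum_singleton, Finset.sum_singleton]
    simp only [Lfun, swapOn_empty, Finset.prod_empty, Finset.prod_insert (Finset.notMem_empty m),
      Finset.prod_singleton]
    have h1 : m + 1 - 1 = m := by omega
    rw [h1]
    rw [swapOn_insert_self, swapOn_insert_self,
      swapOn_insert_ne ∅ m w w' (by omega : m + 1 ≠ m), swapOn_empty]
    rw [Finset.Ico_self, Finset.prod_empty]
    rw [show Hb q (w' m) (w m) = -(q ^ 2 * w m - w' m) / (q ^ 2 * w' m - w m) from rfl]
    field_simp
    ring
  | succ k ih =>
    intro m hm hden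
    have hmν : m < ν := by omega
    have hmν1 : m + 1 < ν := by omega
    have hd : q ^ 2 * w' m - w m ≠ 0 :=
      sub_ne_zero.mpr (hden m (by simp [Finset.mem_Ico]; omega))
    rw [← Finset.insert_Ico_add_one_left_eq_Ico hmν,
      Finset.sum_powerset_insert (by simp : m ∉ Finset.Ico (m + 1) ν),
      ← Finset.sum_add_distrib]
    have hstep : ∀ σ ∈ (Finset.Ico (m + 1) ν).powerset,
        (∏ j ∈ σ, Hb q (w' j) (w j)) * Lfun q ν m (swapOn σ w w') (swapOn σ w' w)
          + (∏ j ∈ insert m σ, Hb q (w' j) (w j)) *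
              Lfun q ν m (swapOn (insert m σ) w w') (swapOn (insert m σ) w' w)
        = (-((q ^ 2 * w m - w' m) * (w m - w' m))) *
            ((∏ j ∈ σ, Hb q (w' j) (w j)) *
              Lfun q ν (m + 1) (swapOn σ w w') (swapOn σ w' w)) := by
      intro σ hσ
      rw [Finset.mem_powerset] at hσ
      have hmσ : m ∉ σ := fun h => absurd (hσ h) (by simp)
      rw [Finset.prod_insert hmσ]
      have hIco : Finset.Ico m (ν - 1) = insert m (Finset.Ico (m + 1) (ν - 1)) :=
        (Finset.insert_Ico_add_one_left_eq_Ico (by omega)).symm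
      unfold Lfun
      rw [hIco, Finset.prod_insert (by simp), Finset.prod_insert (by simp)]
      have hP : ∏ j ∈ Finset.Ico (m + 1) (ν - 1),
          (q * swapOn (insert m σ) w w' (j + 1) - swapOn (insert m σ) w' w j) *
            (swapOn (insert m σ) w' w (j + 1) - q * swapOn (insert m σ) w w' j)
          = ∏ j ∈ Finset.Ico (m + 1) (ν - 1),
          (q * swapOn σ w w' (j + 1) - swapOn σ w' w j) *
            (swapOn σ w' w (j + 1) - q * swapOn σ w w' j) := by
        refine Finset.prod_congr rfl fun j hj => ?_
        simp only [Finset.mem_Ico] at hj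
        rw [swapOn_insert_ne σ m w w' (by omega : j + 1 ≠ m),
          swapOn_insert_ne σ m w' w (by omega : j ≠ m),
          swapOn_insert_ne σ m w' w (by omega : j + 1 ≠ m),
          swapOn_insert_ne σ m w w' (by omega : j ≠ m)]
      rw [hP]
      rw [swapOn_insert_self, swapOn_insert_self,
        swapOn_insert_ne σ m w w' (by omega : m + 1 ≠ m),
        swapOn_insert_ne σ m w' w (by omega : m + 1 ≠ m),
        swapOn_insert_ne σ m w w' (by omega : ν ≠ m),
        swapOn_insert_ne σ m w' w (by omega : ν - 1 ≠ m)]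
      rw [swapOn_not hmσ w w', swapOn_not hmσ w' w]
      set Hσ := ∏ j ∈ σ, Hb q (w' j) (w j) with hHσ
      rw [show Hb q (w' m) (w m) = -(q ^ 2 * w m - w' m) / (q ^ 2 * w' m - w m) from rfl]
      field_simp
      ring
    rw [Finset.sum_congr rfl hstep, ← Finset.mul_sum,
      ih (m + 1) (by omega) (fun j hj => hden j (by simp only [Finset.mem_Ico] at hj ⊢; omega))]
    rw [Finset.prod_insert (by simp)]
    ring

lemma Rsum (q : ℂ) (w w' : ℕ → ℂ) (μ : ℕ) (hμ : 1 ≤ μ) :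
    ∀ k, (∀ j ∈ Finset.Ico μ (μ + k + 1), q ^ 2 * w' j ≠ w j) →
    ∑ σ ∈ (Finset.Ico μ (μ + k + 1)).powerset,
        (∏ j ∈ σ, Hb q (w' j) (w j)) * Rfun q μ (μ + k) (swapOn σ w w') (swapOn σ w' w)
      = (-1) ^ (k + 1) * ∏ j ∈ Finset.Ico μ (μ + k + 1), (q ^ 2 * w j - w' j) * (w j - w' j) := by
  intro k
  induction k with
  | zero =>
    intro hden
    have hd : q ^ 2 * w' μ - w μ ≠ 0 :=
      sub_ne_zero.mpr (hden μ (by simp [Finset.mem_Ico]))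
    simp only [Nat.add_zero] at *
    rw [← Finset.insert_Ico_add_one_left_eq_Ico (by omega : μ < μ + 1), Finset.Ico_self,
      Finset.sum_powerset_insert (by simp), Finset.powerset_empty,
      Finset.sum_singleton, Finset.sum_singleton]
    simp only [Rfun, swapOn_empty, Finset.prod_empty, Finset.prod_insert (Finset.notMem_empty μ),
      Finset.prod_singleton]
    rw [swapOn_insert_self, swapOn_insert_self,
      swapOn_insert_ne ∅ μ w w' (by omega : μ - 1 ≠ μ), swapOn_empty]
    rw [Finset.Ico_self, Finset.prod_empty, Finset.prod_empty]
    rw [show Hb q (w' μ) (w μ) = -(q ^ 2 * w μ - w' μ) / (q ^ 2 * w' μ - w μ) from rfl]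
    simp only [mul_one, one_mul]
    rw [div_mul_eq_mul_div, mul_div_assoc, mul_div_cancel_right₀ _ hd]
    ring
  | succ k ih =>
    intro hden
    set m := μ + k + 1 with hmdef
    have hins : Finset.Ico μ (μ + (k + 1) + 1) = insert m (Finset.Ico μ m) := by
      rw [show μ + (k + 1) + 1 = m + 1 by omega, Finset.Ico_add_one_right_eq_Icc,
        Finset.Ico_insert_right (by omega : μ ≤ m)]
    have hd : q ^ 2 * w' m - w m ≠ 0 :=
      sub_ne_zero.mpr (hden m (by simp [Finset.mem_Ico]; omega))
    rw [hins, show μ + (k + 1) = m by omega,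
      Finset.sum_powerset_insert (by simp : m ∉ Finset.Ico μ m),
      ← Finset.sum_add_distrib]
    have hstep : ∀ σ ∈ (Finset.Ico μ m).powerset,
        (∏ j ∈ σ, Hb q (w' j) (w j)) * Rfun q μ m (swapOn σ w w') (swapOn σ w' w)
          + (∏ j ∈ insert m σ, Hb q (w' j) (w j)) *
              Rfun q μ m (swapOn (insert m σ) w w') (swapOn (insert m σ) w' w)
        = (-((q ^ 2 * w m - w' m) * (w m - w' m))) *
            ((∏ j ∈ σ, Hb q (w' j) (w j)) *
              Rfun q μ (μ + k) (swapOn σ w w') (swapOn σ w' w)) := by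
      intro σ hσ
      rw [Finset.mem_powerset] at hσ
      have hmσ : m ∉ σ := fun h => absurd (hσ h) (by simp)
      rw [Finset.prod_insert hmσ]
      have hIco : Finset.Ico μ m = insert (μ + k) (Finset.Ico μ (μ + k)) := by
        rw [show m = (μ + k) + 1 by omega, Finset.Ico_add_one_right_eq_Icc,
          Finset.Ico_insert_right (by omega : μ ≤ μ + k)]
      unfold Rfun
      rw [hIco, Finset.prod_insert (by simp), Finset.prod_insert (by simp)]
      have hP : ∏ j ∈ Finset.Ico μ (μ + k),
          (q * swapOn (insert m σ) w w' (j + 1) - swapOn (insert m σ) w' w j) *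
            (swapOn (insert m σ) w' w (j + 1) - q * swapOn (insert m σ) w w' j)
          = ∏ j ∈ Finset.Ico μ (μ + k),
          (q * swapOn σ w w' (j + 1) - swapOn σ w' w j) *
            (swapOn σ w' w (j + 1) - q * swapOn σ w w' j) := by
        refine Finset.prod_congr rfl fun j hj => ?_
        simp only [Finset.mem_Ico] at hj
        rw [swapOn_insert_ne σ m w w' (by omega : j + 1 ≠ m),
          swapOn_insert_ne σ m w' w (by omega : j ≠ m),
          swapOn_insert_ne σ m w' w (by omega : j + 1 ≠ m),
          swapOn_insert_ne σ m w w' (by omega : j ≠ m)]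
      rw [hP]
      rw [show μ + k + 1 = m from rfl]
      rw [swapOn_insert_self, swapOn_insert_self,
        swapOn_insert_ne σ m w w' (by omega : μ + k ≠ m),
        swapOn_insert_ne σ m w' w (by omega : μ + k ≠ m),
        swapOn_insert_ne σ m w' w (by omega : μ ≠ m),
        swapOn_insert_ne σ m w w' (by omega : μ - 1 ≠ m)]
      rw [swapOn_not hmσ w w', swapOn_not hmσ w' w]
      set Hσ := ∏ j ∈ σ, Hb q (w' j) (w j) with hHσ
      rw [show Hb q (w' m) (w m) = -(q ^ 2 * w m - w' m) / (q ^ 2 * w' m - w m) from rfl]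
      field_simp
      ring
    rw [Finset.sum_congr rfl hstep, ← Finset.mul_sum,
      ih (fun j hj => hden j (by simp only [Finset.mem_Ico] at hj ⊢; omega))]
    rw [Finset.prod_insert (by simp)]
    ring

/-- Proposition 1, second case: for `1 ≤ μ < ν ≤ M`,
`(q w_μ − w_{μ−1}) Q (q w_ν − w_{ν−1}') ∼ (w_μ' − q w_{μ−1}) Q (w_ν − q w_{ν−1})`
with respect to the bosonic pairs `(w_μ, w_μ'), …, (w_{ν−1}, w_{ν−1}')`. -/
theorem proposition1_second (M N : ℕ) (hM : 2 ≤ M) (hN : 1 ≤ N)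
    (μ ν : ℕ) (hμ1 : 1 ≤ μ) (hμν : μ < ν) (hν : ν ≤ M)
    (q : ℂ) (hq : q ≠ 0) (hq2 : q ^ 2 ≠ 1) (w w' : ℕ → ℂ)
    (hden : ∀ j ∈ Finset.Ico μ ν, q ^ 2 * w' j ≠ w j) :
    WeakEq (Finset.Ico μ ν) (fun _ => Hb q) w w'
      (fun u u' => (q * u μ - u (μ - 1)) * Qbos q μ ν u u' * (q * u ν - u' (ν - 1)))
      (fun u u' => (u' μ - q * u (μ - 1)) * Qbos q μ ν u u' * (u ν - q * u (ν - 1))) := by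
  obtain ⟨k, rfl⟩ : ∃ k, ν = μ + k + 1 := ⟨ν - μ - 1, by omega⟩
  unfold WeakEq
  rw [← sub_eq_zero, ← Finset.sum_sub_distrib]
  have hkey : ∀ u u' : ℕ → ℂ,
      (q * u μ - u (μ - 1)) * Qbos q μ (μ + k + 1) u u' * (q * u (μ + k + 1) - u' (μ + k + 1 - 1))
        - (u' μ - q * u (μ - 1)) * Qbos q μ (μ + k + 1) u u' * (u (μ + k + 1) - q * u (μ + k + 1 - 1))
      = (1 / q) * (Lfun q (μ + k + 1) μ u u' + Rfun q μ (μ + k) u u') := by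
    intro u u'
    unfold Qbos Lfun Rfun
    rw [show μ + k + 1 - 1 = μ + k by omega]
    field_simp
    ring
  have hsum : ∀ σ ∈ (Finset.Ico μ (μ + k + 1)).powerset,
      ((∏ j ∈ σ, (fun _ => Hb q) j (w' j) (w j)) *
          ((q * swapOn σ w w' μ - swapOn σ w w' (μ - 1)) *
            Qbos q μ (μ + k + 1) (swapOn σ w w') (swapOn σ w' w) *
            (q * swapOn σ w w' (μ + k + 1) - swapOn σ w' w (μ + k + 1 - 1)))
        - (∏ j ∈ σ, (fun _ => Hb q) j (w' j) (w j)) *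
          ((swapOn σ w' w μ - q * swapOn σ w w' (μ - 1)) *
            Qbos q μ (μ + k + 1) (swapOn σ w w') (swapOn σ w' w) *
            (swapOn σ w w' (μ + k + 1) - q * swapOn σ w w' (μ + k + 1 - 1))))
      = (1 / q) * ((∏ j ∈ σ, Hb q (w' j) (w j)) *
            Lfun q (μ + k + 1) μ (swapOn σ w w') (swapOn σ w' w)
          + (∏ j ∈ σ, Hb q (w' j) (w j)) *
            Rfun q μ (μ + k) (swapOn σ w w') (swapOn σ w' w)) := by
    intro σ hσ
    rw [← mul_sub, hkey (swapOn σ w w') (swapOn σ w' w)]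
    ring
  rw [Finset.sum_congr rfl hsum, ← Finset.mul_sum, Finset.sum_add_distrib]
  rw [Lsum q w w' (μ + k + 1) k μ rfl hden,
    Rsum q w w' μ hμ1 k hden]
  rw [pow_succ]
  ring
end
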